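/- arXiv:2205.06864 — 3 statements merged into one kernel-verified Lean document; each statement's English description precedes it below -/
import Mathlib

section
/- Let X be a doubling metric measure space (closed balls of positive radius having positive finite measure) such that for every x ∈ X and r > 0, μ(B(x,r) △ B(y,r)) → 0 as y → x. Let F ⊆ L^p(X), 1 < p < ∞, be bounded, E ⊆ X bounded, and r > 0. Then {(A_r f)·χ_E : f ∈ F} is relatively compact (equivalently, totally bounded) in L^p(X). -/
open MeasureTheory Metric Filter
open scoped ENNReal Topology symmDiff

/-- The average function `A_r f (x) = μ(B(x,r))⁻¹ ∫_{B(x,r)} f dμ`. -/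
noncomputable def avg {X : Type*} [MeasurableSpace X] [MetricSpace X]
    (μ : Measure X) (r : ℝ) (f : X → ℝ) (x : X) : ℝ :=
  (μ (closedBall x r)).toReal⁻¹ * ∫ y in closedBall x r, f y ∂μ

section aux
open Set
open scoped symmDiff Topology

lemma holder_set_bound {X : Type*} [MeasurableSpace X] {μ : Measure X}
    {p : ℝ} (hp : 1 < p) {f : X → ℝ} (hf : AEStronglyMeasurable f μ)
    {C : ℝ≥0∞} (hC : C ≠ ⊤) (hfC : eLpNorm f (ENNReal.ofReal p) μ ≤ C)
    {A : Set X} (hA : μ A ≠ ⊤) :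
    ∫ y in A, |f y| ∂μ ≤ (C * μ A ^ (1 - 1/p)).toReal := by
  have hp0 : 0 < p := lt_trans one_pos hp
  have he : (0:ℝ) ≤ 1 - 1/p := by
    have : 1/p ≤ 1 := by
      rw [div_le_one hp0]; exact hp.le
    linarith
  have h1 : ∫ y in A, |f y| ∂μ = (∫⁻ y in A, ‖f y‖₊ ∂μ).toReal := by
    have := integral_norm_eq_lintegral_enorm (hf.restrict (s := A))
    simp only [Real.norm_eq_abs] at this
    exact this
  have h2 : (∫⁻ y in A, ‖f y‖₊ ∂μ) = eLpNorm f 1 (μ.restrict A) :=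
    (eLpNorm_one_eq_lintegral_enorm (f := f) (μ := μ.restrict A)).symm
  have h3 : eLpNorm f 1 (μ.restrict A) ≤
      eLpNorm f (ENNReal.ofReal p) (μ.restrict A) * (μ A) ^ (1 - 1/p) := by
    have h := eLpNorm_le_eLpNorm_mul_rpow_measure_univ (μ := μ.restrict A)
      (p := (1:ℝ≥0∞)) (q := ENNReal.ofReal p)
      (by simpa using ENNReal.one_le_ofReal.mpr hp.le) (hf.restrict (s := A))
    simpa [Measure.restrict_apply_univ, ENNReal.toReal_one, ENNReal.toReal_ofReal hp0.le]
      using h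
  have h4 : eLpNorm f (ENNReal.ofReal p) (μ.restrict A) * (μ A) ^ (1 - 1/p) ≤
      C * μ A ^ (1 - 1/p) :=
    mul_le_mul_left ((eLpNorm_mono_measure f Measure.restrict_le_self).trans hfC) _
  rw [h1, h2]
  exact ENNReal.toReal_mono
    (ENNReal.mul_ne_top hC (ENNReal.rpow_ne_top_of_nonneg he hA)) (h3.trans h4)

lemma memLp_integrableOn {X : Type*} [MeasurableSpace X] {μ : Measure X} {p : ℝ} (hp : 1 < p)
    {f : X → ℝ} (hf : MemLp f (ENNReal.ofReal p) μ) {A : Set X} (hA : μ A ≠ ⊤) :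
    IntegrableOn f A μ := by
  haveI : IsFiniteMeasure (μ.restrict A) :=
    ⟨by rw [Measure.restrict_apply_univ]; exact hA.lt_top⟩
  exact memLp_one_iff_integrable.mp ((hf.restrict A).mono_exponent
    (by simpa using ENNReal.one_le_ofReal.mpr hp.le))

lemma setIntegral_abs_le' {X : Type*} [MeasurableSpace X] {μ : Measure X}
    {p : ℝ} (hp : 1 < p) {f : X → ℝ} (hf : AEStronglyMeasurable f μ)
    {C : ℝ≥0∞} (hC : C ≠ ⊤) (hfC : eLpNorm f (ENNReal.ofReal p) μ ≤ C)
    {A : Set X} (hA : μ A ≠ ⊤) :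
    |∫ y in A, f y ∂μ| ≤ (C * μ A ^ (1 - 1/p)).toReal := by
  refine le_trans ?_ (holder_set_bound hp hf hC hfC hA)
  have := norm_integral_le_integral_norm (μ := μ.restrict A) f
  simpa [Real.norm_eq_abs] using this

lemma abs_avg_le {X : Type*} [MetricSpace X] [MeasurableSpace X] {μ : Measure X}
    {p : ℝ} (hp : 1 < p) {f : X → ℝ} (hf : AEStronglyMeasurable f μ)
    {C : ℝ≥0∞} (hC : C ≠ ⊤) (hfC : eLpNorm f (ENNReal.ofReal p) μ ≤ C)
    {r : ℝ} {x : X} (hx : μ (closedBall x r) ≠ ⊤) :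
    |avg μ r f x| ≤
      (μ (closedBall x r)).toReal⁻¹ * (C * μ (closedBall x r) ^ (1 - 1/p)).toReal := by
  rw [avg, abs_mul, abs_inv, abs_of_nonneg ENNReal.toReal_nonneg]
  exact mul_le_mul_of_nonneg_left (setIntegral_abs_le' hp hf hC hfC hx)
    (by positivity)

lemma avg_osc {X : Type*} [MetricSpace X] [MeasurableSpace X] [BorelSpace X] {μ : Measure X}
    {p : ℝ} (hp : 1 < p) {C : ℝ≥0∞} (hC : C ≠ ⊤)
    {f : X → ℝ} (hf : MemLp f (ENNReal.ofReal p) μ)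
    (hfC : eLpNorm f (ENNReal.ofReal p) μ ≤ C)
    {r : ℝ} {m : ℝ≥0∞} (hm0 : m ≠ 0) (hmt : m ≠ ⊤)
    {y z : X}
    (hmy : m ≤ μ (closedBall y r)) (hmz : m ≤ μ (closedBall z r))
    (hyt : μ (closedBall y r) ≠ ⊤) (hzt : μ (closedBall z r) ≠ ⊤) :
    |avg μ r f y - avg μ r f z| ≤
      m.toReal⁻¹ * (2 * (C * μ ((closedBall y r) ∆ (closedBall z r)) ^ (1 - 1/p)).toReal)
        + (μ ((closedBall y r) ∆ (closedBall z r))).toReal / m.toReal ^ 2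
          * (C * μ (closedBall z r) ^ (1 - 1/p)).toReal := by
  have hp0 : 0 < p := lt_trans one_pos hp
  have he : (0:ℝ) ≤ 1 - 1/p := by
    have : 1/p ≤ 1 := by rw [div_le_one hp0]; exact hp.le
    linarith
  set B1 := closedBall y r with hB1
  set B2 := closedBall z r with hB2
  set S := B1 ∆ B2 with hSdef
  have hfm : AEStronglyMeasurable f μ := hf.aestronglyMeasurable
  have hSt : μ S ≠ ⊤ := measure_symmDiff_ne_top hyt hzt
  have hI1 : IntegrableOn f B1 μ := memLp_integrableOn hp hf hyt
  have hI2 : IntegrableOn f B2 μ := memLp_integrableOn hp hf hzt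
  set a := (μ B1).toReal with ha'
  set b := (μ B2).toReal with hb'
  have hm' : 0 < m.toReal := ENNReal.toReal_pos hm0 hmt
  have hma : m.toReal ≤ a := ENNReal.toReal_mono hyt hmy
  have hmb : m.toReal ≤ b := ENNReal.toReal_mono hzt hmz
  have ha : 0 < a := lt_of_lt_of_le hm' hma
  have hb : 0 < b := lt_of_lt_of_le hm' hmb
  set I := ∫ u in B1, f u ∂μ with hI
  set J := ∫ u in B2, f u ∂μ with hJ
  have hd1t : μ (B1 \ B2) ≠ ⊤ := fun h => hyt (top_le_iff.mp (h ▸ measure_mono diff_subset))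
  have hd2t : μ (B2 \ B1) ≠ ⊤ := fun h => hzt (top_le_iff.mp (h ▸ measure_mono diff_subset))
  have hsub1 : μ (B1 \ B2) ≤ μ S :=
    measure_mono (by rw [hSdef, Set.symmDiff_def]; exact subset_union_left)
  have hsub2 : μ (B2 \ B1) ≤ μ S :=
    measure_mono (by rw [hSdef, Set.symmDiff_def]; exact subset_union_right)
  have hmono : ∀ {s t : Set X}, μ s ≤ μ t → μ t ≠ ⊤ →
      (C * μ s ^ (1 - 1/p)).toReal ≤ (C * μ t ^ (1 - 1/p)).toReal := by
    intro s t hst htt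
    exact ENNReal.toReal_mono
      (ENNReal.mul_ne_top hC (ENNReal.rpow_ne_top_of_nonneg he htt))
      (mul_le_mul_right (ENNReal.rpow_le_rpow hst he) C)
  have key1 : I - J = (∫ u in B1 \ B2, f u ∂μ) - (∫ u in B2 \ B1, f u ∂μ) := by
    have e1 := integral_inter_add_diff (s := B1) (t := B2) measurableSet_closedBall hI1
    have e2 := integral_inter_add_diff (s := B2) (t := B1) measurableSet_closedBall hI2
    rw [inter_comm] at e2
    rw [hI, hJ, ← e1, ← e2]; ring
  have habsIJ : |I - J| ≤ 2 * (C * μ S ^ (1 - 1/p)).toReal := by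
    rw [key1]
    have b1 : |∫ u in B1 \ B2, f u ∂μ| ≤ (C * μ S ^ (1 - 1/p)).toReal :=
      (setIntegral_abs_le' hp hfm hC hfC hd1t).trans (hmono hsub1 hSt)
    have b2 : |∫ u in B2 \ B1, f u ∂μ| ≤ (C * μ S ^ (1 - 1/p)).toReal :=
      (setIntegral_abs_le' hp hfm hC hfC hd2t).trans (hmono hsub2 hSt)
    calc |_ - _| ≤ |∫ u in B1 \ B2, f u ∂μ| + |∫ u in B2 \ B1, f u ∂μ| := abs_sub _ _
    _ ≤ 2 * (C * μ S ^ (1 - 1/p)).toReal := by linarith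
  have hsubset1 : B1 ⊆ B2 ∪ S := by
    intro w hw
    by_cases hw2 : w ∈ B2
    · exact Or.inl hw2
    · exact Or.inr (Set.mem_symmDiff.mpr (Or.inl ⟨hw, hw2⟩))
  have hsubset2 : B2 ⊆ B1 ∪ S := by
    intro w hw
    by_cases hw2 : w ∈ B1
    · exact Or.inl hw2
    · exact Or.inr (Set.mem_symmDiff.mpr (Or.inr ⟨hw, hw2⟩))
  have hab : |b - a| ≤ (μ S).toReal := by
    have h1 : a ≤ b + (μ S).toReal := by
      have h : μ B1 ≤ μ B2 + μ S :=
        (measure_mono hsubset1).trans (measure_union_le _ _)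
      have h' := ENNReal.toReal_mono (by finiteness) h
      rwa [ENNReal.toReal_add hzt hSt] at h'
    have h2 : b ≤ a + (μ S).toReal := by
      have h : μ B2 ≤ μ B1 + μ S :=
        (measure_mono hsubset2).trans (measure_union_le _ _)
      have h' := ENNReal.toReal_mono (by finiteness) h
      rwa [ENNReal.toReal_add hyt hSt] at h'
    rw [abs_sub_le_iff]; constructor <;> linarith
  have key2 : |a⁻¹ - b⁻¹| ≤ (μ S).toReal / m.toReal ^ 2 := by
    have e : a⁻¹ - b⁻¹ = (b - a) / (a * b) := by field_simp
    rw [e, abs_div, abs_of_pos (by positivity : (0:ℝ) < a * b)]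
    exact div_le_div₀ ENNReal.toReal_nonneg hab (by positivity) (by nlinarith)
  have key3 : |J| ≤ (C * μ B2 ^ (1 - 1/p)).toReal := setIntegral_abs_le' hp hfm hC hfC hzt
  have havg : avg μ r f y - avg μ r f z = a⁻¹ * (I - J) + (a⁻¹ - b⁻¹) * J := by
    rw [avg, avg, ← hB1, ← hB2, ← ha', ← hb', ← hI, ← hJ]; ring
  rw [havg]
  have hainv : a⁻¹ ≤ m.toReal⁻¹ := inv_anti₀ hm' hma
  calc |a⁻¹ * (I - J) + (a⁻¹ - b⁻¹) * J|
      ≤ |a⁻¹ * (I - J)| + |(a⁻¹ - b⁻¹) * J| := abs_add_le _ _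
    _ = a⁻¹ * |I - J| + |a⁻¹ - b⁻¹| * |J| := by
        rw [abs_mul, abs_mul, abs_of_pos (by positivity : (0:ℝ) < a⁻¹)]
    _ ≤ m.toReal⁻¹ * (2 * (C * μ S ^ (1 - 1/p)).toReal)
        + (μ S).toReal / m.toReal ^ 2 * (C * μ B2 ^ (1 - 1/p)).toReal := by
        have t1 : a⁻¹ * |I - J| ≤ m.toReal⁻¹ * (2 * (C * μ S ^ (1 - 1/p)).toReal) :=
          mul_le_mul hainv habsIJ (abs_nonneg _) (by positivity)
        have t2 : |a⁻¹ - b⁻¹| * |J| ≤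
            (μ S).toReal / m.toReal ^ 2 * (C * μ B2 ^ (1 - 1/p)).toReal :=
          mul_le_mul key2 key3 (abs_nonneg _) (by positivity)
        linarith

lemma dbl_pow {X : Type*} [MetricSpace X] [MeasurableSpace X] (μ : Measure X) {γ : ℝ}
    (hdbl : ∀ (x : X) (s : ℝ), 0 < s →
      μ (closedBall x (2 * s)) ≤ ENNReal.ofReal γ * μ (closedBall x s))
    (x : X) {s : ℝ} (hs : 0 < s) :
    ∀ k : ℕ, μ (closedBall x (2 ^ k * s)) ≤ (ENNReal.ofReal γ) ^ k * μ (closedBall x s) := by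
  intro k
  induction k with
  | zero => simp
  | succ k ih =>
    have h1 : (2:ℝ) ^ (k+1) * s = 2 * (2 ^ k * s) := by ring
    rw [h1]
    calc μ (closedBall x (2 * (2 ^ k * s)))
        ≤ ENNReal.ofReal γ * μ (closedBall x (2 ^ k * s)) := hdbl x _ (by positivity)
      _ ≤ ENNReal.ofReal γ * ((ENNReal.ofReal γ) ^ k * μ (closedBall x s)) :=
          mul_le_mul_right ih _
      _ = (ENNReal.ofReal γ) ^ (k+1) * μ (closedBall x s) := by ring

end aux

set_option maxHeartbeats 2000000 in
/-- The family of truncated averages `{(A_r f)·χ_E : f ∈ F}` is totally bounded in `L^p`. -/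
theorem avg_indicator_totallyBounded {X : Type*} [MetricSpace X] [MeasurableSpace X]
    [BorelSpace X] (μ : Measure X)
    (hball : ∀ (x : X) (r : ℝ), 0 < r → μ (closedBall x r) ≠ 0 ∧ μ (closedBall x r) ≠ ⊤)
    (γ : ℝ) (hγ : 1 ≤ γ)
    (hdbl : ∀ (x : X) (r : ℝ), 0 < r →
      μ (closedBall x (2 * r)) ≤ ENNReal.ofReal γ * μ (closedBall x r))
    (hsymm : ∀ (x : X) (r : ℝ), 0 < r →
      Tendsto (fun y => μ (symmDiff (closedBall x r) (closedBall y r))) (nhds x) (nhds 0))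
    (p : ℝ) (hp : 1 < p)
    (F : Set (X → ℝ)) (hFmem : ∀ f ∈ F, MemLp f (ENNReal.ofReal p) μ)
    (C : ℝ≥0∞) (hC : C ≠ ⊤) (hFbdd : ∀ f ∈ F, eLpNorm f (ENNReal.ofReal p) μ ≤ C)
    (E : Set X) (hE : Bornology.IsBounded E)
    (r : ℝ) (hr : 0 < r) :
    ∀ ε : ℝ, 0 < ε → ∃ G : Finset (X → ℝ), ∀ f ∈ F, ∃ g ∈ G,
      eLpNorm (fun x => E.indicator (avg μ r f) x - g x) (ENNReal.ofReal p) μ <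
        ENNReal.ofReal ε := by
  classical
  intro ε hε
  have hp0 : 0 < p := lt_trans one_pos hp
  have hP1 : (1:ℝ≥0∞) ≤ ENNReal.ofReal p := by simpa using ENNReal.one_le_ofReal.mpr hp.le
  have hP0 : ENNReal.ofReal p ≠ 0 := (ENNReal.ofReal_pos.mpr hp0).ne'
  have hPt : ENNReal.ofReal p ≠ ⊤ := ENNReal.ofReal_ne_top
  have hPr : (ENNReal.ofReal p).toReal = p := ENNReal.toReal_ofReal hp0.le
  have hεE : (0:ℝ≥0∞) < ENNReal.ofReal ε := ENNReal.ofReal_pos.mpr hε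
  set e : ℝ := 1 - 1/p with hedef
  have he : (0:ℝ) < e := by
    have : 1/p < 1 := by rw [div_lt_one hp0]; exact hp
    simp only [hedef]; linarith
  rcases Set.eq_empty_or_nonempty E with hEe | ⟨x₀, hx₀⟩
  · refine ⟨{fun _ => 0}, fun f _ => ⟨_, Finset.mem_singleton_self _, ?_⟩⟩
    have hz : (fun x => E.indicator (avg μ r f) x - (fun _ => (0:ℝ)) x) = fun _ => (0:ℝ) := by
      funext x; simp [hEe]
    rw [hz]
    simpa [eLpNorm_zero'] using hεE
  -- E nonempty
  obtain ⟨R₀, hR₀⟩ := hE.subset_closedBall x₀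
  set R := max R₀ 1 with hRdef
  have hR1 : (1:ℝ) ≤ R := le_max_right _ _
  have hER : E ⊆ closedBall x₀ R :=
    hR₀.trans (closedBall_subset_closedBall (le_max_left _ _))
  set D := closedBall x₀ (R + r + 1) with hDdef
  have hDrad : (0:ℝ) < R + r + 1 := by linarith
  have hDt : μ D ≠ ⊤ := (hball x₀ _ hDrad).2
  have hD0 : μ D ≠ 0 := (hball x₀ _ hDrad).1
  have hBxD : ∀ x ∈ E, closedBall x r ⊆ D := by
    intro x hx w hw
    have h1 : dist x x₀ ≤ R := hER hx
    have h2 : dist w x ≤ r := hw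
    have : dist w x₀ ≤ R + r + 1 := by
      calc dist w x₀ ≤ dist w x + dist x x₀ := dist_triangle _ _ _
        _ ≤ r + R := by linarith
        _ ≤ R + r + 1 := by linarith
    exact this
  have hVD : ∀ x ∈ E, closedBall x 1 ⊆ D := by
    intro x hx w hw
    have h1 : dist x x₀ ≤ R := hER hx
    have h2 : dist w x ≤ 1 := hw
    have : dist w x₀ ≤ R + r + 1 := by
      calc dist w x₀ ≤ dist w x + dist x x₀ := dist_triangle _ _ _
        _ ≤ 1 + R := by linarith
        _ ≤ R + r + 1 := by linarith
    exact this
  have hBxt : ∀ x ∈ E, μ (closedBall x r) ≠ ⊤ := fun x hx =>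
    fun h => hDt (top_le_iff.mp (h ▸ measure_mono (hBxD x hx)))
  -- lower bound on measures of balls centered in E
  obtain ⟨k, hk⟩ : ∃ k : ℕ, R + r ≤ 2 ^ k * r := by
    obtain ⟨k, hk⟩ := pow_unbounded_of_one_lt ((R + r)/r) (one_lt_two (α := ℝ))
    refine ⟨k, ?_⟩
    rw [div_lt_iff₀ hr] at hk
    linarith
  have hg00 : ENNReal.ofReal γ ≠ 0 := (ENNReal.ofReal_pos.mpr (by linarith)).ne'
  have hg0t : ENNReal.ofReal γ ≠ ⊤ := ENNReal.ofReal_ne_top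
  set m := μ (closedBall x₀ r) / (ENNReal.ofReal γ) ^ k with hmdef
  have hm0 : m ≠ 0 :=
    ENNReal.div_ne_zero.mpr ⟨(hball x₀ r hr).1, ENNReal.pow_ne_top hg0t⟩
  have hmt : m ≠ ⊤ :=
    (ENNReal.div_lt_top (hball x₀ r hr).2 (pow_ne_zero k hg00)).ne
  have hmE : ∀ x ∈ E, m ≤ μ (closedBall x r) := by
    intro x hx
    have hsub : closedBall x₀ r ⊆ closedBall x (2 ^ k * r) := by
      intro w hw
      have h1 : dist x x₀ ≤ R := hER hx
      have h2 : dist w x₀ ≤ r := hw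
      have : dist w x ≤ 2 ^ k * r := by
        calc dist w x ≤ dist w x₀ + dist x₀ x := dist_triangle _ _ _
          _ ≤ r + R := by rw [dist_comm x₀ x]; linarith
          _ ≤ 2 ^ k * r := by linarith
      exact this
    have h1 : μ (closedBall x₀ r) ≤ (ENNReal.ofReal γ) ^ k * μ (closedBall x r) :=
      (measure_mono hsub).trans (dbl_pow μ hdbl x hr k)
    rw [hmdef, ENNReal.div_le_iff (pow_ne_zero k hg00) (ENNReal.pow_ne_top hg0t)]
    rw [mul_comm]
    exact h1
  have hm' : 0 < m.toReal := ENNReal.toReal_pos hm0 hmt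
  set C' := C.toReal with hC'def
  have hC'0 : 0 ≤ C' := ENNReal.toReal_nonneg
  set Dv := (μ D).toReal with hDvdef
  have hDv0 : 0 < Dv := ENNReal.toReal_pos hD0 hDt
  set M := m.toReal⁻¹ * (C' * Dv ^ e) with hMdef
  have hM0 : 0 ≤ M := by positivity
  -- uniform bound on averages over E
  have hCmul : ∀ {s : Set X}, μ s ≤ μ D →
      (C * μ s ^ e).toReal ≤ C' * Dv ^ e := by
    intro s hs
    rw [ENNReal.toReal_mul, ← ENNReal.toReal_rpow]
    exact mul_le_mul_of_nonneg_left
      (Real.rpow_le_rpow ENNReal.toReal_nonneg (ENNReal.toReal_mono hDt hs) he.le) hC'0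
  have hMbound : ∀ f ∈ F, ∀ x ∈ E, |avg μ r f x| ≤ M := by
    intro f hf x hx
    refine (abs_avg_le hp (hFmem f hf).aestronglyMeasurable hC (hFbdd f hf)
      (hBxt x hx)).trans ?_
    rw [hMdef]
    have h1 : (μ (closedBall x r)).toReal⁻¹ ≤ m.toReal⁻¹ :=
      inv_anti₀ hm' (ENNReal.toReal_mono (hBxt x hx) (hmE x hx))
    exact mul_le_mul h1 (hCmul (measure_mono (hBxD x hx)))
      ENNReal.toReal_nonneg (by positivity)
  -- numerical parameters
  set α := Dv ^ (1/p) with hαdef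
  have hα0 : 0 ≤ α := by positivity
  set δ := ε / (4 * (α + 1)) with hδdef
  have hδ0 : 0 < δ := by positivity
  set τ := (ε / (2 * (M + 1))) ^ p with hτdef
  have hτ0 : 0 < τ := by positivity
  -- oscillation threshold
  set φ : ℝ → ℝ := fun t =>
    m.toReal⁻¹ * (2 * (C' * t ^ e)) + t / m.toReal ^ 2 * (C' * Dv ^ e) with hφdef
  obtain ⟨t₀, ht₀pos, ht₀⟩ : ∃ t₀ > 0, ∀ t : ℝ, dist t 0 < t₀ → φ t < δ := by
    have hcont : ContinuousAt φ 0 := by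
      have h1 : ContinuousAt (fun t : ℝ => t ^ e) 0 :=
        Real.continuousAt_rpow_const 0 e (Or.inr he.le)
      exact (continuousAt_const.mul (continuousAt_const.mul
        (continuousAt_const.mul h1))).add
        (((continuousAt_id.div continuousAt_const (by positivity)).mul continuousAt_const))
    have hφ0 : φ 0 = 0 := by
      simp [hφdef, Real.zero_rpow he.ne']
    have hev : ∀ᶠ t in 𝓝 (0:ℝ), φ t < δ := by
      have := hcont.tendsto
      rw [hφ0] at this
      exact this.eventually_lt_const hδ0
    rw [Metric.eventually_nhds_iff] at hev
    obtain ⟨t₀, ht₀pos, h⟩ := hev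
    exact ⟨t₀, ht₀pos, fun t ht => h ht⟩
  set η := ENNReal.ofReal (min t₀ 1 / 2) with hηdef
  have hηpos : 0 < η := ENNReal.ofReal_pos.mpr (by positivity)
  have hηsmall : ∀ S : ℝ≥0∞, S < η → φ S.toReal < δ := by
    intro S hS
    apply ht₀
    rw [Real.dist_0_eq_abs, abs_of_nonneg ENNReal.toReal_nonneg]
    have h1 : S.toReal ≤ min t₀ 1 / 2 := by
      have := ENNReal.toReal_mono ENNReal.ofReal_ne_top hS.le
      rwa [ENNReal.toReal_ofReal (by positivity)] at this
    have h2 : min t₀ 1 / 2 < t₀ := by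
      have : min t₀ 1 ≤ t₀ := min_le_left _ _
      linarith
    linarith
  -- per-point radii from hsymm
  have hrad : ∀ x, x ∈ E → ∃ d, 0 < d ∧ ∀ w, dist w x < d →
      μ (symmDiff (closedBall x r) (closedBall w r)) < η := by
    intro x hx
    have hev : ∀ᶠ w in 𝓝 x, μ (symmDiff (closedBall x r) (closedBall w r)) < η :=
      (hsymm x r hr).eventually_lt_const hηpos
    rw [Metric.eventually_nhds_iff] at hev
    obtain ⟨d, hd0, hd⟩ := hev
    exact ⟨d, hd0, fun w hw => hd hw⟩
  choose! d hd0 hdp using hrad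
  set ρ : X → ℝ := fun x => min (d x / 5) 5⁻¹ with hρdef
  have hρpos : ∀ x ∈ E, 0 < ρ x := fun x hx => lt_min (by have := hd0 x hx; positivity) (by norm_num)
  have hρle : ∀ x ∈ E, ρ x ≤ 5⁻¹ := fun x _ => min_le_right _ _
  -- Vitali covering
  obtain ⟨u, huE, hudisj, hucov⟩ :=
    Vitali.exists_disjoint_subfamily_covering_enlargement_closedBall E id ρ 1
      (fun a ha => (hρle a ha).trans (by norm_num)) 4 (by norm_num)
  haveI : IsFiniteMeasure (μ.restrict D) :=
    ⟨by rw [Measure.restrict_apply_univ]; exact hDt.lt_top⟩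
  have hballD : ∀ x ∈ E, closedBall x (ρ x) ⊆ D := fun x hx =>
    (closedBall_subset_closedBall ((hρle x hx).trans (by norm_num))).trans (hVD x hx)
  have hucnt : u.Countable := by
    have hmble : ∀ i : u, MeasurableSet (closedBall (i : X) (ρ (i : X))) :=
      fun i => measurableSet_closedBall
    have hdisj' : Pairwise (Function.onFun Disjoint fun i : u => closedBall (i : X) (ρ (i : X))) := by
      intro i j hij
      exact hudisj i.2 j.2 (Subtype.coe_ne_coe.mpr hij)
    have hcnt := MeasureTheory.Measure.countable_meas_pos_of_disjoint_iUnion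
      (μ := μ.restrict D) hmble hdisj'
    have huniv : (Set.univ : Set u).Countable := by
      refine Set.Countable.mono ?_ hcnt
      intro i _
      have hiE : (i : X) ∈ E := huE i.2
      have : μ.restrict D (closedBall (i : X) (ρ (i : X))) =
          μ (closedBall (i : X) (ρ (i : X))) := by
        rw [Measure.restrict_apply measurableSet_closedBall,
          Set.inter_eq_self_of_subset_left (hballD _ hiE)]
      simp only [Set.mem_setOf_eq, this]
      exact (hball _ _ (hρpos _ hiE)).1.bot_lt
    have : Countable u := Set.countable_univ_iff.mp huniv
    exact Set.countable_coe_iff.mp this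
  have hune : u.Nonempty := by
    obtain ⟨b, hb, -⟩ := hucov x₀ hx₀
    exact ⟨b, hb⟩
  obtain ⟨z, hzr⟩ := hucnt.exists_eq_range hune
  have hzE : ∀ n, z n ∈ E := fun n => huE (hzr ▸ Set.mem_range_self n)
  set V : ℕ → Set X := fun n => closedBall (z n) (4 * ρ (z n)) with hVdef
  set Q : ℕ → Set X := disjointed V with hQdef
  have hQm : ∀ n, MeasurableSet (Q n) :=
    MeasurableSet.disjointed (fun n => measurableSet_closedBall)
  have hQd : Pairwise (Function.onFun Disjoint Q) := disjoint_disjointed V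
  have hQV : ∀ n, Q n ⊆ V n := fun n => disjointed_subset V n
  have hVDn : ∀ n, V n ⊆ D := by
    intro n
    refine (closedBall_subset_closedBall ?_).trans (hVD (z n) (hzE n))
    have := hρle (z n) (hzE n)
    linarith
  have hEQ : E ⊆ ⋃ n, Q n := by
    rw [hQdef, iUnion_disjointed]
    intro x hx
    obtain ⟨b, hb, hsub⟩ := hucov x hx
    rw [hzr] at hb
    obtain ⟨n, rfl⟩ := hb
    exact Set.mem_iUnion.mpr ⟨n, hsub (mem_closedBall_self (hρpos x hx).le)⟩
  have hQsum : ∑' n, μ (Q n) ≠ ⊤ := by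
    rw [← measure_iUnion hQd hQm]
    refine fun h => hDt (top_le_iff.mp (h ▸ measure_mono ?_))
    exact Set.iUnion_subset fun n => (hQV n).trans (hVDn n)
  have hosc : ∀ n, ∀ w ∈ V n,
      μ (symmDiff (closedBall (z n) r) (closedBall w r)) < η := by
    intro n w hw
    apply hdp (z n) (hzE n)
    have h1 : dist w (z n) ≤ 4 * ρ (z n) := hw
    have h2 : ρ (z n) ≤ d (z n) / 5 := min_le_left _ _
    have h3 : 0 < d (z n) := hd0 (z n) (hzE n)
    have h4 : 0 < ρ (z n) := hρpos (z n) (hzE n)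
    calc dist w (z n) ≤ 4 * ρ (z n) := h1
      _ < d (z n) := by linarith
  obtain ⟨N, hN⟩ : ∃ N, ∑' k, μ (Q (k + N)) < ENNReal.ofReal τ := by
    have := (ENNReal.tendsto_sum_nat_add (fun n => μ (Q n)) hQsum).eventually_lt_const
      (ENNReal.ofReal_pos.mpr hτ0)
    exact this.exists
  set A := ⋃ n ∈ Finset.range N, Q n with hAdef
  have hAm : MeasurableSet A := Finset.measurableSet_biUnion _ (fun n _ => hQm n)
  have hAD : A ⊆ D := by
    intro x hx
    simp only [hAdef, Set.mem_iUnion] at hx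
    obtain ⟨n, -, hn⟩ := hx
    exact hVDn n (hQV n hn)
  set B := (⋃ n, Q n) \ A with hBdef
  have hBm : MeasurableSet B := (MeasurableSet.iUnion hQm).diff hAm
  have hμB : μ B < ENNReal.ofReal τ := by
    refine lt_of_le_of_lt ?_ hN
    have hsub : B ⊆ ⋃ j, Q (j + N) := by
      rintro x ⟨hx1, hx2⟩
      obtain ⟨n, hn⟩ := Set.mem_iUnion.mp hx1
      have hnN : N ≤ n := by
        by_contra hlt
        push_neg at hlt
        exact hx2 (Set.mem_iUnion₂.mpr ⟨n, Finset.mem_range.mpr hlt, hn⟩)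
      exact Set.mem_iUnion.mpr ⟨n - N, by rwa [Nat.sub_add_cancel hnN]⟩
    exact (measure_mono hsub).trans (measure_iUnion_le _)
  -- the finite approximating family
  set K : ℕ := ⌈M / δ⌉₊ + 1 with hKdef
  set gmap : (Fin N → ℤ) → (X → ℝ) := fun c => fun x =>
    E.indicator (fun x' => ∑ n : Fin N, (Q (n:ℕ)).indicator (fun _ => (c n : ℝ) * δ) x') x
    with hgmapdef
  refine ⟨Finset.image gmap (Fintype.piFinset fun _ => Finset.Icc (-(K:ℤ)) (K:ℤ)), ?_⟩
  intro f hfF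
  set c : Fin N → ℤ := fun n => round (avg μ r f (z (n:ℕ)) / δ) with hcdef
  have hcK : ∀ n : Fin N, c n ∈ Finset.Icc (-(K:ℤ)) (K:ℤ) := by
    intro n
    have h1 : |avg μ r f (z (n:ℕ))| ≤ M := hMbound f hfF _ (hzE _)
    have h3 : |avg μ r f (z (n:ℕ)) / δ| ≤ M / δ := by
      rw [abs_div, abs_of_pos hδ0]
      gcongr
    have h4 := abs_sub_round (avg μ r f (z (n:ℕ)) / δ)
    have h2 : |(c n : ℝ)| ≤ M / δ + 1 := by
      have habs : |(c n : ℝ)| ≤ |avg μ r f (z (n:ℕ)) / δ| + 1/2 := by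
        have heq : (c n : ℝ) = avg μ r f (z (n:ℕ)) / δ -
            (avg μ r f (z (n:ℕ)) / δ - (round (avg μ r f (z (n:ℕ)) / δ) : ℝ)) := by
          rw [hcdef]; ring
        rw [heq]
        calc |_ - _| ≤ |avg μ r f (z (n:ℕ)) / δ| +
            |avg μ r f (z (n:ℕ)) / δ - (round (avg μ r f (z (n:ℕ)) / δ) : ℝ)| := abs_sub _ _
          _ ≤ |avg μ r f (z (n:ℕ)) / δ| + 1/2 := by linarith
      linarith
    have h5 : M / δ + 1 ≤ (K : ℝ) := by
      rw [hKdef]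
      push_cast
      have := Nat.le_ceil (M / δ)
      linarith
    have h6 : |c n| ≤ (K : ℤ) := by
      have h7 : |(c n : ℝ)| ≤ ((K : ℤ) : ℝ) := by
        refine (h2.trans h5).trans_eq ?_
        push_cast; ring
      rw [← Int.cast_abs] at h7
      exact_mod_cast h7
    exact Finset.mem_Icc.mpr (abs_le.mp h6)
  refine ⟨gmap c, Finset.mem_image_of_mem _ (Fintype.mem_piFinset.mpr hcK), ?_⟩
  set maj : X → ℝ := fun x =>
    A.indicator (fun _ => 2*δ) x + B.indicator (fun _ => M) x with hmajdef
  have hmaj : ∀ x, ‖E.indicator (avg μ r f) x - gmap c x‖ ≤ maj x := by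
    intro x
    rw [Real.norm_eq_abs]
    by_cases hxE : x ∈ E
    · have hTf : E.indicator (avg μ r f) x = avg μ r f x := Set.indicator_of_mem hxE _
      have hg : gmap c x = ∑ n : Fin N, (Q (n:ℕ)).indicator (fun _ => (c n : ℝ) * δ) x :=
        Set.indicator_of_mem hxE _
      by_cases hxA : x ∈ A
      · obtain ⟨n, hnN, hxQ⟩ : ∃ n, n < N ∧ x ∈ Q n := by
          have := hxA
          simp only [hAdef, Set.mem_iUnion, Finset.mem_range, exists_prop] at this
          exact this
        have hsum : ∑ n' : Fin N, (Q (n':ℕ)).indicator (fun _ => ((c n' : ℝ)) * δ) x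
            = (c ⟨n, hnN⟩ : ℝ) * δ := by
          rw [Finset.sum_eq_single_of_mem (⟨n, hnN⟩ : Fin N) (Finset.mem_univ _)]
          · exact Set.indicator_of_mem hxQ _
          · intro m _ hm
            apply Set.indicator_of_notMem
            intro hxm
            have hmn : (m : ℕ) ≠ n := fun h => hm (Fin.ext h)
            exact Set.disjoint_left.mp (hQd hmn) hxm hxQ
        have hxV : x ∈ V n := hQV n hxQ
        have hS := hosc n x hxV
        have hosc1 : |avg μ r f x - avg μ r f (z n)| ≤
            φ ((μ (symmDiff (closedBall x r) (closedBall (z n) r))).toReal) := by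
          refine (avg_osc hp hC (hFmem f hfF) (hFbdd f hfF) hm0 hmt (hmE x hxE)
            (hmE (z n) (hzE n)) (hBxt x hxE) (hBxt (z n) (hzE n))).trans ?_
          have hterm1 : (C * μ (symmDiff (closedBall x r) (closedBall (z n) r)) ^ e).toReal
              = C' * (μ (symmDiff (closedBall x r) (closedBall (z n) r))).toReal ^ e := by
            rw [ENNReal.toReal_mul, ENNReal.toReal_rpow]
          have hterm2 : (C * μ (closedBall (z n) r) ^ e).toReal ≤ C' * Dv ^ e :=
            hCmul (measure_mono (hBxD (z n) (hzE n)))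
          simp only [hφdef]
          rw [← hedef]
          refine add_le_add (le_of_eq ?_) ?_
          · rw [hterm1]
          · exact mul_le_mul_of_nonneg_left hterm2 (by positivity)
        have hosc2 : |avg μ r f x - avg μ r f (z n)| < δ := by
          refine hosc1.trans_lt (hηsmall _ ?_)
          rwa [symmDiff_comm]
        have hmesh : |avg μ r f (z n) - (c ⟨n, hnN⟩ : ℝ) * δ| ≤ δ := by
          have hv := abs_sub_round (avg μ r f (z n) / δ)
          have heq : avg μ r f (z n) - (c ⟨n, hnN⟩ : ℝ) * δ =
              (avg μ r f (z n) / δ - (round (avg μ r f (z n) / δ) : ℝ)) * δ := by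
            rw [hcdef]
            field_simp
          rw [heq, abs_mul, abs_of_pos hδ0]
          nlinarith [hδ0]
        have hmajx : maj x = 2*δ := by
          rw [hmajdef]
          simp only []
          rw [Set.indicator_of_mem hxA, Set.indicator_of_notMem (fun h => h.2 hxA)]
          ring
        rw [hTf, hg, hsum, hmajx]
        calc |avg μ r f x - (c ⟨n, hnN⟩ : ℝ) * δ|
            ≤ |avg μ r f x - avg μ r f (z n)| + |avg μ r f (z n) - (c ⟨n, hnN⟩ : ℝ) * δ| :=
              abs_sub_le _ _ _
          _ ≤ 2*δ := by linarith
      · have hxB : x ∈ B := ⟨hEQ hxE, hxA⟩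
        have hsum : ∑ n' : Fin N, (Q (n':ℕ)).indicator (fun _ => ((c n' : ℝ)) * δ) x = 0 := by
          apply Finset.sum_eq_zero
          intro j _
          apply Set.indicator_of_notMem
          intro hxj
          exact hxA (Set.mem_iUnion₂.mpr ⟨(j:ℕ), Finset.mem_range.mpr j.2, hxj⟩)
        have hmajx : maj x = M := by
          rw [hmajdef]
          simp only []
          rw [Set.indicator_of_notMem hxA, Set.indicator_of_mem hxB]
          ring
        rw [hTf, hg, hsum, hmajx, sub_zero]
        exact hMbound f hfF x hxE
    · have hTf : E.indicator (avg μ r f) x = 0 := Set.indicator_of_notMem hxE _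
      have hg : gmap c x = 0 := Set.indicator_of_notMem hxE _
      rw [hTf, hg, sub_zero, abs_zero, hmajdef]
      exact add_nonneg (Set.indicator_nonneg (fun _ _ => by positivity) x)
        (Set.indicator_nonneg (fun _ _ => hM0) x)
  have h1 : eLpNorm (fun x => E.indicator (avg μ r f) x - gmap c x) (ENNReal.ofReal p) μ
      ≤ eLpNorm maj (ENNReal.ofReal p) μ := eLpNorm_mono_real hmaj
  have hmaj_eq : maj = (A.indicator (fun _ => (2*δ:ℝ))) + (B.indicator (fun _ => (M:ℝ))) := rfl
  have h2 : eLpNorm maj (ENNReal.ofReal p) μ ≤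
      eLpNorm (A.indicator (fun _ => (2*δ:ℝ))) (ENNReal.ofReal p) μ
        + eLpNorm (B.indicator (fun _ => (M:ℝ))) (ENNReal.ofReal p) μ := by
    rw [hmaj_eq]
    exact eLpNorm_add_le (aestronglyMeasurable_const.indicator hAm)
      (aestronglyMeasurable_const.indicator hBm) hP1
  have h3 : eLpNorm (A.indicator (fun _ => (2*δ:ℝ))) (ENNReal.ofReal p) μ
      = ENNReal.ofReal (2*δ) * μ A ^ (1/p) := by
    rw [eLpNorm_indicator_const hAm hP0 hPt, hPr, Real.enorm_eq_ofReal (by positivity)]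
  have h4 : eLpNorm (B.indicator (fun _ => (M:ℝ))) (ENNReal.ofReal p) μ
      = ENNReal.ofReal M * μ B ^ (1/p) := by
    rw [eLpNorm_indicator_const hBm hP0 hPt, hPr, Real.enorm_eq_ofReal hM0]
  have h5 : μ A ^ ((1:ℝ)/p) ≤ ENNReal.ofReal (Dv ^ (1/p)) := by
    calc μ A ^ ((1:ℝ)/p) ≤ μ D ^ ((1:ℝ)/p) :=
        ENNReal.rpow_le_rpow (measure_mono hAD) (by positivity)
      _ = ENNReal.ofReal (Dv ^ (1/p)) := by
        rw [show μ D = ENNReal.ofReal Dv from (ENNReal.ofReal_toReal hDt).symm,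
          ENNReal.ofReal_rpow_of_pos hDv0]
  have h6 : μ B ^ ((1:ℝ)/p) ≤ ENNReal.ofReal (τ ^ (1/p)) := by
    calc μ B ^ ((1:ℝ)/p) ≤ (ENNReal.ofReal τ) ^ ((1:ℝ)/p) :=
        ENNReal.rpow_le_rpow hμB.le (by positivity)
      _ = ENNReal.ofReal (τ ^ (1/p)) := ENNReal.ofReal_rpow_of_pos hτ0
  have hτp : τ ^ ((1:ℝ)/p) = ε / (2*(M+1)) := by
    rw [hτdef, ← Real.rpow_mul (by positivity), mul_one_div_cancel hp0.ne', Real.rpow_one]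
  have hfinal : 2*δ * Dv ^ ((1:ℝ)/p) + M * τ ^ ((1:ℝ)/p) < ε := by
    rw [hτp, ← hαdef]
    have e1 : 2*δ*α = ε*α / (2*(α+1)) := by
      have hne : α + 1 ≠ 0 := by positivity
      rw [hδdef]
      field_simp
      ring
    have e2 : ε*α / (2*(α+1)) < ε/2 := by
      rw [div_lt_div_iff₀ (by positivity) (by norm_num)]
      nlinarith
    have e3 : M * (ε / (2*(M+1))) = ε*M / (2*(M+1)) := by ring
    have e4 : ε*M / (2*(M+1)) < ε/2 := by
      rw [div_lt_div_iff₀ (by positivity) (by norm_num)]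
      nlinarith
    calc 2*δ*α + M * (ε / (2*(M+1))) = ε*α / (2*(α+1)) + ε*M / (2*(M+1)) := by
          rw [e1, e3]
      _ < ε/2 + ε/2 := by linarith
      _ = ε := by ring
  calc eLpNorm (fun x => E.indicator (avg μ r f) x - gmap c x) (ENNReal.ofReal p) μ
      ≤ eLpNorm maj (ENNReal.ofReal p) μ := h1
    _ ≤ eLpNorm (A.indicator (fun _ => (2*δ:ℝ))) (ENNReal.ofReal p) μ
        + eLpNorm (B.indicator (fun _ => (M:ℝ))) (ENNReal.ofReal p) μ := h2
    _ = ENNReal.ofReal (2*δ) * μ A ^ ((1:ℝ)/p) + ENNReal.ofReal M * μ B ^ ((1:ℝ)/p) := by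
        rw [h3, h4]
    _ ≤ ENNReal.ofReal (2*δ) * ENNReal.ofReal (Dv ^ ((1:ℝ)/p))
        + ENNReal.ofReal M * ENNReal.ofReal (τ ^ ((1:ℝ)/p)) :=
        add_le_add (mul_le_mul_right h5 _) (mul_le_mul_right h6 _)
    _ = ENNReal.ofReal (2*δ * Dv ^ ((1:ℝ)/p) + M * τ ^ ((1:ℝ)/p)) := by
        rw [← ENNReal.ofReal_mul (by positivity), ← ENNReal.ofReal_mul hM0,
          ← ENNReal.ofReal_add (by positivity) (by positivity)]
    _ < ENNReal.ofReal ε := (ENNReal.ofReal_lt_ofReal_iff hε).mpr hfinal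
end

section
/- Let X be a doubling metric measure space where closed balls of positive radius have positive finite measure. For n ∈ ℕ and a fixed basepoint x₀, the set L(n) = {f ∈ L^p(X) : f has an n-Lipschitz representative, ‖f‖_p ≤ n, supp f ⊆ B(x₀,n)} is closed in L^p(X). -/
open MeasureTheory Metric Filter
open scoped ENNReal Topology

set_option maxHeartbeats 1000000 in
set_option synthInstance.maxHeartbeats 400000 in
theorem Ln_isClosed {X : Type*} [MetricSpace X] [MeasurableSpace X] [BorelSpace X]
    (μ : Measure X)
    (hball : ∀ (x : X) (r : ℝ), 0 < r → μ (closedBall x r) ≠ 0 ∧ μ (closedBall x r) ≠ ⊤)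
    (γ : ℝ) (hγ : 1 ≤ γ)
    (hdbl : ∀ (x : X) (r : ℝ), 0 < r →
      μ (closedBall x (2 * r)) ≤ ENNReal.ofReal γ * μ (closedBall x r))
    (p : ℝ≥0∞) [Fact (1 ≤ p)] (hp' : p ≠ ⊤)
    (x₀ : X) (n : ℕ) :
    IsClosed {f : MeasureTheory.Lp ℝ p μ | ‖f‖ ≤ (n : ℝ) ∧
      ∃ g : X → ℝ, LipschitzWith (n : NNReal) g ∧ (⇑f =ᵐ[μ] g) ∧
        Function.support g ⊆ closedBall x₀ (n : ℝ)} := by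
  have hp0 : p ≠ 0 := by
    have := (Fact.out : (1:ℝ≥0∞) ≤ p); intro h; simp [h] at this
  rw [← isSeqClosed_iff_isClosed]
  intro u f hu hlim
  have hnorm : ‖f‖ ≤ (n : ℝ) :=
    le_of_tendsto (hlim.norm) (Eventually.of_forall fun k => (hu k).1)
  refine ⟨hnorm, ?_⟩
  choose g hLip hae hsupp using fun k => (hu k).2
  -- convergence in measure, a.e. subsequence
  have htm : TendstoInMeasure μ (fun k => (u k : X → ℝ)) atTop f := by
    refine tendstoInMeasure_of_tendsto_eLpNorm hp0
      (fun k => Lp.aestronglyMeasurable _) (Lp.aestronglyMeasurable _) ?_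
    exact (Lp.tendsto_Lp_iff_tendsto_eLpNorm' u f).mp hlim
  obtain ⟨ns, -, hae2⟩ := htm.exists_seq_tendsto_ae
  -- conull set where everything converges
  set T : Set X := {x | Tendsto (fun k => (u (ns k) : X → ℝ) x) atTop (𝓝 (f x)) ∧
      ∀ k, (u k : X → ℝ) x = g k x} with hT
  have hTconull : ∀ᵐ x ∂μ, x ∈ T := hae2.and (ae_all_iff.mpr hae)
  have hgT : ∀ x ∈ T, Tendsto (fun k => g (ns k) x) atTop (𝓝 (f x)) := by
    intro x hx
    simpa only [fun k => hx.2 (ns k)] using hx.1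
  -- density of T
  have hTdense : ∀ (x : X) (r : ℝ), 0 < r → ∃ y ∈ T, dist y x < r := by
    intro x r hr
    by_contra hcon
    push_neg at hcon
    have hsub : closedBall x (r/2) ⊆ {y | y ∉ T} := by
      intro y hy hyT
      exact absurd (hcon y hyT) (not_le.mpr (lt_of_le_of_lt (mem_closedBall.mp hy) (by linarith)))
    have h0 : μ (closedBall x (r/2)) = 0 := by
      refine measure_mono_null hsub ?_
      simpa [ae_iff] using hTconull
    exact (hball x (r/2) (by linarith)).1 h0
  -- f is Lipschitz on T
  have hLipOn : LipschitzOnWith (n : NNReal) (⇑f) T := by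
    refine LipschitzOnWith.of_dist_le_mul fun x hx y hy => ?_
    refine le_of_tendsto ((hgT x hx).dist (hgT y hy)) (Eventually.of_forall fun k => ?_)
    simpa using (hLip (ns k)).dist_le_mul x y
  obtain ⟨G, hGlip, hGeq⟩ := hLipOn.extend_real
  -- G = 0 outside the closed ball
  have hGzero : ∀ x, x ∉ closedBall x₀ (n : ℝ) → G x = 0 := by
    intro x hx
    have hd : (n : ℝ) < dist x x₀ := by
      simpa [mem_closedBall, not_le] using hx
    set ε := dist x x₀ - n with hε
    have hεpos : 0 < ε := by simp [hε]; linarith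
    have key : ∀ δ : ℝ, 0 < δ → δ < ε → |G x| ≤ n * δ := by
      intro δ hδ hδε
      obtain ⟨y, hyT, hyd⟩ := hTdense x δ hδ
      have hyout : y ∉ closedBall x₀ (n : ℝ) := by
        simp only [mem_closedBall, not_le]
        have := dist_triangle x y x₀
        rw [dist_comm y x] at hyd
        linarith
      have hgy0 : ∀ k, g k y = 0 := fun k =>
        Function.notMem_support.mp (fun h => hyout (hsupp k h))
      have hfy : f y = 0 := by
        have := hgT y hyT
        simp only [hgy0] at this
        exact tendsto_nhds_unique this tendsto_const_nhds
      have hGy : G y = 0 := by rw [← hGeq hyT, hfy]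
      calc |G x| = |G x - G y| := by rw [hGy, sub_zero]
        _ ≤ n * dist x y := by
            have := hGlip.dist_le_mul x y
            simpa [Real.dist_eq] using this
        _ ≤ n * δ := by
            rw [dist_comm] at hyd
            exact mul_le_mul_of_nonneg_left hyd.le (by positivity)
    have habs : |G x| ≤ 0 := by
      refine le_of_forall_pos_le_add fun c hc => ?_
      have hδ1 : (0:ℝ) < min (ε/2) (c/(n+1)) := by positivity
      have := key _ hδ1 (lt_of_le_of_lt (min_le_left _ _) (by linarith))
      have h2 : (n:ℝ) * min (ε/2) (c/(n+1)) ≤ n * (c/(n+1)) :=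
        mul_le_mul_of_nonneg_left (min_le_right _ _) (by positivity)
      have h3 : (n:ℝ) * (c/(n+1)) ≤ c := by
        have h4 : (n:ℝ)*(c/(n+1)) ≤ ((n:ℝ)+1)*(c/(n+1)) :=
          mul_le_mul_of_nonneg_right (by linarith) (by positivity)
        have heq : ((n:ℝ)+1)*(c/(n+1)) = c := by field_simp
        linarith
      linarith
    exact abs_eq_zero.mp (le_antisymm habs (abs_nonneg _))
  refine ⟨G, hGlip, ?_, ?_⟩
  · filter_upwards [hTconull] with x hx
    exact hGeq hx
  · exact Function.support_subset_iff'.mpr hGzero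
end

section
/- Let X be a doubling metric measure space (closed balls of positive radius having positive finite measure) such that μ(B(x,r) △ B(y,r)) → 0 as y → x for all x, r. Then for every n ∈ ℕ, the set L(n) = {f ∈ L^p(X) : f is n-Lipschitz, ‖f‖_p ≤ n, supp f ⊆ B(x₀,n)} is compact in L^p(X), and hence Lip_b(X) = ∪_n L(n), the set of Lipschitz functions in L^p(X) with bounded support, is σ-compact. -/
open MeasureTheory Metric Filter
open scoped ENNReal

section Aux

variable {X : Type*} [MetricSpace X] [MeasurableSpace X] [BorelSpace X] (μ : Measure X)

private lemma aux_iter_dbl {γ : ℝ}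
    (hdbl : ∀ (x : X) (r : ℝ), 0 < r →
      μ (closedBall x (2 * r)) ≤ ENNReal.ofReal γ * μ (closedBall x r))
    (x : X) {r : ℝ} (hr : 0 < r) (k : ℕ) :
    μ (closedBall x (2 ^ k * r)) ≤ (ENNReal.ofReal γ) ^ k * μ (closedBall x r) := by
  induction k with
  | zero => simp
  | succ k ih =>
      have h2 : (2:ℝ) ^ (k+1) * r = 2 * (2 ^ k * r) := by ring
      have hpos : 0 < (2:ℝ) ^ k * r := by positivity
      calc μ (closedBall x (2 ^ (k+1) * r)) = μ (closedBall x (2 * (2 ^ k * r))) := by rw [h2]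
        _ ≤ ENNReal.ofReal γ * μ (closedBall x (2 ^ k * r)) := hdbl x _ hpos
        _ ≤ ENNReal.ofReal γ * ((ENNReal.ofReal γ) ^ k * μ (closedBall x r)) :=
            by gcongr
        _ = (ENNReal.ofReal γ) ^ (k+1) * μ (closedBall x r) := by ring

private lemma aux_lower
    (hball : ∀ (x : X) (r : ℝ), 0 < r → μ (closedBall x r) ≠ 0 ∧ μ (closedBall x r) ≠ ⊤)
    {γ : ℝ} (hγ : 1 ≤ γ)
    (hdbl : ∀ (x : X) (r : ℝ), 0 < r →
      μ (closedBall x (2 * r)) ≤ ENNReal.ofReal γ * μ (closedBall x r))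
    (x₀ : X) {R r : ℝ} (hR : 0 < R) (hr : 0 < r) :
    ∃ c : ℝ≥0∞, c ≠ 0 ∧ c ≠ ⊤ ∧ ∀ x ∈ closedBall x₀ R, c ≤ μ (closedBall x r) := by
  obtain ⟨k, hk⟩ := pow_unbounded_of_one_lt (2 * R / r) (by norm_num : (1:ℝ) < 2)
  have hk' : 2 * R ≤ 2 ^ k * r := by
    rw [div_lt_iff₀ hr] at hk; linarith
  have hnum0 : μ (closedBall x₀ R) ≠ 0 := (hball x₀ R hR).1
  have hnumt : μ (closedBall x₀ R) ≠ ⊤ := (hball x₀ R hR).2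
  have hdent : (ENNReal.ofReal γ) ^ k ≠ ⊤ := ENNReal.pow_ne_top ENNReal.ofReal_ne_top
  have hden0 : (ENNReal.ofReal γ) ^ k ≠ 0 :=
    pow_ne_zero _ (ENNReal.ofReal_pos.mpr (lt_of_lt_of_le zero_lt_one hγ)).ne'
  refine ⟨μ (closedBall x₀ R) / (ENNReal.ofReal γ) ^ k, (ENNReal.div_pos hnum0 hdent).ne',
    (ENNReal.div_lt_top hnumt hden0).ne, ?_⟩
  intro x hx
  have hsub : closedBall x₀ R ⊆ closedBall x (2 ^ k * r) := by
    intro y hy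
    rw [mem_closedBall] at *
    calc dist y x ≤ dist y x₀ + dist x₀ x := dist_triangle _ _ _
      _ ≤ R + R := add_le_add hy (by rwa [dist_comm])
      _ = 2 * R := by ring
      _ ≤ 2 ^ k * r := hk'
  have h1 : μ (closedBall x₀ R) ≤ (ENNReal.ofReal γ) ^ k * μ (closedBall x r) :=
    le_trans (measure_mono hsub) (aux_iter_dbl μ hdbl x hr k)
  exact ENNReal.div_le_of_le_mul (by rwa [mul_comm] at h1)

private lemma aux_tb
    (hball : ∀ (x : X) (r : ℝ), 0 < r → μ (closedBall x r) ≠ 0 ∧ μ (closedBall x r) ≠ ⊤)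
    {γ : ℝ} (hγ : 1 ≤ γ)
    (hdbl : ∀ (x : X) (r : ℝ), 0 < r →
      μ (closedBall x (2 * r)) ≤ ENNReal.ofReal γ * μ (closedBall x r))
    (x₀ : X) {R : ℝ} (hR : 0 < R) :
    TotallyBounded (closedBall x₀ R) := by
  classical
  rw [Metric.totallyBounded_iff]
  by_contra hcon
  push_neg at hcon
  obtain ⟨ε, hε, hcov⟩ := hcon
  have key : ∀ s : Finset X, ∃ x, x ∈ closedBall x₀ R ∧ ∀ y ∈ s, ε ≤ dist x y := by
    intro s
    have h1 := hcov (↑s) s.finite_toSet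
    rw [Set.not_subset] at h1
    obtain ⟨x, hx, hx2⟩ := h1
    refine ⟨x, hx, fun y hy => ?_⟩
    by_contra h
    push_neg at h
    exact hx2 (Set.mem_biUnion (by simpa using hy) (mem_ball'.mpr (by rwa [dist_comm] at h)))
  choose pick hpick hsep using key
  let v : ℕ → Finset X := fun k => Nat.rec (∅ : Finset X) (fun _ vk => insert (pick vk) vk) k
  have hv_succ : ∀ k, v (k+1) = insert (pick (v k)) (v k) := fun k => rfl
  have hmono : Monotone v := monotone_nat_of_le_succ (fun k => by
    rw [hv_succ]; exact Finset.subset_insert _ _)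
  set u : ℕ → X := fun k => pick (v k) with hu
  have hmem_u : ∀ i j, i < j → u i ∈ v j := by
    intro i j h
    exact hmono h (by rw [hv_succ]; exact Finset.mem_insert_self _ _)
  have hsep' : ∀ i j, i < j → ε ≤ dist (u j) (u i) := fun i j h =>
    hsep (v j) (u i) (hmem_u i j h)
  have hu_ball : ∀ k, u k ∈ closedBall x₀ R := fun k => hpick (v k)
  obtain ⟨c, hc0, hct, hc⟩ := aux_lower μ hball hγ hdbl x₀ hR (by positivity : 0 < ε/3)
  have hdisj : ∀ i j, i ≠ j → Disjoint (closedBall (u i) (ε/3)) (closedBall (u j) (ε/3)) := by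
    intro i j hij
    rcases lt_or_gt_of_ne hij with h | h
    · exact closedBall_disjoint_closedBall (by
        rw [dist_comm]
        calc ε/3 + ε/3 < ε := by linarith
          _ ≤ dist (u j) (u i) := hsep' i j h)
    · exact closedBall_disjoint_closedBall (by
        calc ε/3 + ε/3 < ε := by linarith
          _ ≤ dist (u i) (u j) := hsep' j i h)
  have hfin : μ (closedBall x₀ (R + ε)) ≠ ⊤ := (hball x₀ _ (by positivity)).2
  obtain ⟨N, hN⟩ := ENNReal.exists_nat_gt (ENNReal.div_lt_top hfin hc0).ne
  have hsum : (N : ℝ≥0∞) * c ≤ μ (closedBall x₀ (R + ε)) := by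
    have hle : ∀ i ∈ Finset.range N, closedBall (u i) (ε/3) ⊆ closedBall x₀ (R + ε) := by
      intro i _ y hy
      rw [mem_closedBall] at *
      calc dist y x₀ ≤ dist y (u i) + dist (u i) x₀ := dist_triangle _ _ _
        _ ≤ ε/3 + R := add_le_add hy (hu_ball i)
        _ ≤ R + ε := by linarith
    calc (N : ℝ≥0∞) * c = ∑ _i ∈ Finset.range N, c := by
          simp [Finset.sum_const, nsmul_eq_mul]
      _ ≤ ∑ i ∈ Finset.range N, μ (closedBall (u i) (ε/3)) :=
          Finset.sum_le_sum fun i _ => hc _ (hu_ball i)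
      _ = μ (⋃ i ∈ Finset.range N, closedBall (u i) (ε/3)) := by
          refine (measure_biUnion_finset ?_ (fun i _ => measurableSet_closedBall)).symm
          intro i _ j _ hij
          exact hdisj i j hij
      _ ≤ μ (closedBall x₀ (R + ε)) := measure_mono (Set.iUnion₂_subset hle)
  exact absurd ((ENNReal.le_div_iff_mul_le (Or.inl hc0) (Or.inl hct)).mpr hsum) hN.not_ge

private lemma aux_floor {η a b : ℝ} (hη : 0 < η) (h : ⌊a/η⌋ = ⌊b/η⌋) : |a - b| < η := by
  have h1 := Int.floor_le (a/η)
  have h2 := Int.lt_floor_add_one (a/η)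
  have h3 := Int.floor_le (b/η)
  have h4 := Int.lt_floor_add_one (b/η)
  rw [h] at h1 h2
  have habs : |a/η - b/η| < 1 := abs_sub_lt_iff.mpr ⟨by linarith, by linarith⟩
  have heq : a - b = (a/η - b/η) * η := by field_simp
  rw [heq, abs_mul, abs_of_pos hη]
  calc |a/η - b/η| * η < 1 * η := mul_lt_mul_of_pos_right habs hη
    _ = η := one_mul η

private lemma aux_elp_upper {p : ℝ≥0∞} (hp0 : p ≠ 0) (hp' : p ≠ ⊤) {g : X → ℝ} {s : Set X}
    (hs : MeasurableSet s) {M : ℝ} (hsupp : Function.support g ⊆ s) (hM : ∀ x, ‖g x‖ ≤ M) :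
    eLpNorm g p μ ≤ (‖M‖₊ : ℝ≥0∞) * μ s ^ (1 / p.toReal) := by
  have hmono : eLpNorm g p μ ≤ eLpNorm (s.indicator fun _ => M) p μ := by
    apply eLpNorm_mono
    intro x
    by_cases hx : x ∈ s
    · rw [Set.indicator_of_mem hx]
      exact (hM x).trans (le_abs_self M)
    · have hz : g x = 0 := by
        by_contra h
        exact hx (hsupp (Function.mem_support.mpr h))
      simp [Set.indicator_of_notMem hx, hz]
  exact hmono.trans_eq (eLpNorm_indicator_const hs hp0 hp')

private lemma aux_memLp {p : ℝ≥0∞} (hp0 : p ≠ 0) (hp' : p ≠ ⊤) {g : X → ℝ} {s : Set X}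
    (hg : Continuous g) (hs : MeasurableSet s) (hst : μ s ≠ ⊤)
    (hsupp : Function.support g ⊆ s) {M : ℝ} (hM : ∀ x, ‖g x‖ ≤ M) :
    MemLp g p μ := by
  refine ⟨hg.aestronglyMeasurable, lt_of_le_of_lt (aux_elp_upper μ hp0 hp' hs hsupp hM) ?_⟩
  exact ENNReal.mul_lt_top ENNReal.coe_lt_top
    ((ENNReal.rpow_lt_top_of_nonneg (by positivity) hst))

private lemma aux_elp_lower {p : ℝ≥0∞} (hp0 : p ≠ 0) (hp' : p ≠ ⊤) {g : X → ℝ} {s : Set X}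
    (hs : MeasurableSet s) {b : ℝ} (h : ∀ y ∈ s, b ≤ |g y|) :
    ENNReal.ofReal b * μ s ^ (1 / p.toReal) ≤ eLpNorm g p μ := by
  set q := p.toReal with hqdef
  have hq0 : 0 < q := ENNReal.toReal_pos hp0 hp'
  rw [eLpNorm_eq_lintegral_rpow_enorm_toReal hp0 hp']
  have h1 : ENNReal.ofReal b * μ s ^ (1/q) = ((ENNReal.ofReal b) ^ q * μ s) ^ (1/q) := by
    rw [ENNReal.mul_rpow_of_nonneg _ _ (by positivity), ← ENNReal.rpow_mul,
      mul_one_div_cancel hq0.ne', ENNReal.rpow_one]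
  rw [h1]
  apply ENNReal.rpow_le_rpow _ (by positivity)
  calc (ENNReal.ofReal b) ^ q * μ s
      = ∫⁻ y, s.indicator (fun _ => (ENNReal.ofReal b) ^ q) y ∂μ := by
        rw [lintegral_indicator hs, setLIntegral_const]
    _ ≤ ∫⁻ y, (‖g y‖₊ : ℝ≥0∞) ^ q ∂μ := by
        apply lintegral_mono
        intro y
        by_cases hy : y ∈ s
        · rw [Set.indicator_of_mem hy]
          apply ENNReal.rpow_le_rpow _ hq0.le
          calc ENNReal.ofReal b ≤ ENNReal.ofReal |g y| := ENNReal.ofReal_le_ofReal (h y hy)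
            _ = (‖g y‖₊ : ℝ≥0∞) := (Real.enorm_eq_ofReal_abs _).symm
        · simp [Set.indicator_of_notMem hy]

end Aux

theorem Ln_compact_and_Lipb_sigmaCompact {X : Type*} [MetricSpace X] [MeasurableSpace X]
    [BorelSpace X] (μ : Measure X)
    (hball : ∀ (x : X) (r : ℝ), 0 < r → μ (closedBall x r) ≠ 0 ∧ μ (closedBall x r) ≠ ⊤)
    (γ : ℝ) (hγ : 1 ≤ γ)
    (hdbl : ∀ (x : X) (r : ℝ), 0 < r →
      μ (closedBall x (2 * r)) ≤ ENNReal.ofReal γ * μ (closedBall x r))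
    (hsymm : ∀ (x : X) (r : ℝ), 0 < r →
      Tendsto (fun y => μ (symmDiff (closedBall x r) (closedBall y r))) (nhds x) (nhds 0))
    (p : ℝ≥0∞) [Fact (1 ≤ p)] (hp' : p ≠ ⊤)
    (x₀ : X) :
    (∀ n : ℕ, IsCompact {f : MeasureTheory.Lp ℝ p μ | ‖f‖ ≤ (n : ℝ) ∧
      ∃ g : X → ℝ, LipschitzWith (n : NNReal) g ∧ (⇑f =ᵐ[μ] g) ∧
        Function.support g ⊆ closedBall x₀ (n : ℝ)}) ∧
    IsSigmaCompact {f : MeasureTheory.Lp ℝ p μ |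
      ∃ (g : X → ℝ) (K : NNReal), LipschitzWith K g ∧ (⇑f =ᵐ[μ] g) ∧
        Bornology.IsBounded (Function.support g)} := by
  classical
  have hp1 : 1 ≤ p := Fact.out
  have hp0 : p ≠ 0 := (lt_of_lt_of_le zero_lt_one hp1).ne'
  have hq0 : 0 < p.toReal := ENNReal.toReal_pos hp0 hp'
  have hcomp : ∀ n : ℕ, IsCompact {f : MeasureTheory.Lp ℝ p μ | ‖f‖ ≤ (n : ℝ) ∧
      ∃ g : X → ℝ, LipschitzWith (n : NNReal) g ∧ (⇑f =ᵐ[μ] g) ∧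
        Function.support g ⊆ closedBall x₀ (n : ℝ)} := by
    intro n
    rcases Nat.eq_zero_or_pos n with hn0 | hn
    · subst hn0
      have hsub : {f : MeasureTheory.Lp ℝ p μ | ‖f‖ ≤ ((0:ℕ) : ℝ) ∧
          ∃ g : X → ℝ, LipschitzWith ((0:ℕ) : NNReal) g ∧ (⇑f =ᵐ[μ] g) ∧
            Function.support g ⊆ closedBall x₀ ((0:ℕ) : ℝ)} ⊆ {0} := by
        rintro f ⟨hf, -⟩
        have hf0 : ‖f‖ ≤ 0 := by simpa using hf
        simpa using norm_le_zero_iff.mp hf0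
      exact ((Set.finite_singleton 0).subset hsub).isCompact
    · have hnR : (0:ℝ) < n := by exact_mod_cast hn
      set q := p.toReal with hqdef
      obtain ⟨c, hc0, hctop, hc⟩ := aux_lower μ hball hγ hdbl x₀ hnR one_pos
      have hμn : μ (closedBall x₀ (n:ℝ)) ≠ ⊤ := (hball x₀ n hnR).2
      have hcq0 : c ^ (1/q) ≠ 0 := (ENNReal.rpow_pos hc0.bot_lt hctop).ne'
      have hcqt : c ^ (1/q) ≠ ⊤ := ENNReal.rpow_ne_top_of_nonneg (by positivity) hctop
      set A : ℝ := (ENNReal.ofReal n / c ^ (1/q)).toReal with hAdef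
      have hA0 : 0 ≤ A := ENNReal.toReal_nonneg
      set M : ℝ := n + A with hMdef
      have hM0 : 0 < M := lt_of_lt_of_le hnR (le_add_of_nonneg_right hA0)
      -- pointwise bound for representatives
      have hbound : ∀ (f : MeasureTheory.Lp ℝ p μ), ‖f‖ ≤ (n:ℝ) → ∀ (g : X → ℝ),
          LipschitzWith (n : NNReal) g → (⇑f =ᵐ[μ] g) →
          Function.support g ⊆ closedBall x₀ (n:ℝ) → ∀ x, |g x| ≤ M := by
        intro f hfn g hlip hae hsupp x
        by_cases hgx : g x = 0
        · rw [hgx, abs_zero]; exact hM0.le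
        · have hx : x ∈ closedBall x₀ (n:ℝ) := hsupp (Function.mem_support.mpr hgx)
          by_contra hcon
          push_neg at hcon
          set b := |g x| - n with hbdef
          have hbA : A < b := by
            have hMlt : (n:ℝ) + A < |g x| := hcon
            simp only [hbdef]; linarith
          have hb0 : 0 < b := lt_of_le_of_lt hA0 hbA
          have hball1 : ∀ y ∈ closedBall x 1, b ≤ |g y| := by
            intro y hy
            have hd := hlip.dist_le_mul x y
            rw [Real.dist_eq] at hd
            have hd1 : dist x y ≤ 1 := by rw [dist_comm]; exact mem_closedBall.mp hy
            have habs : |g x| - |g y| ≤ |g x - g y| := abs_sub_abs_le_abs_sub _ _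
            have hgd : |g x - g y| ≤ (n:ℝ) * dist x y := by
              have hn' : ((n : NNReal) : ℝ) = (n : ℝ) := by norm_cast
              rw [← hn']; exact hd
            have hdn : (n:ℝ) * dist x y ≤ (n:ℝ) := by
              nlinarith [dist_nonneg (x := x) (y := y)]
            simp only [hbdef]
            linarith
          have hle : ENNReal.ofReal b * μ (closedBall x 1) ^ (1/q) ≤ eLpNorm (⇑f) p μ := by
            rw [eLpNorm_congr_ae hae]
            exact aux_elp_lower μ hp0 hp' measurableSet_closedBall hball1
          have hf_elp : eLpNorm (⇑f) p μ ≤ ENNReal.ofReal n := by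
            rw [← ENNReal.ofReal_toReal (MeasureTheory.Lp.eLpNorm_ne_top f)]
            exact ENNReal.ofReal_le_ofReal (by rw [← MeasureTheory.Lp.norm_def]; exact hfn)
          have hcle : c ^ (1/q) ≤ μ (closedBall x 1) ^ (1/q) :=
            ENNReal.rpow_le_rpow (hc x hx) (by positivity)
          have hfinal : ENNReal.ofReal b * c ^ (1/q) ≤ ENNReal.ofReal n :=
            le_trans (by gcongr) (le_trans hle hf_elp)
          have hdiv : ENNReal.ofReal b ≤ ENNReal.ofReal n / c ^ (1/q) :=
            (ENNReal.le_div_iff_mul_le (Or.inl hcq0) (Or.inl hcqt)).mpr hfinal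
          have hbA' : b ≤ A := by
            have h2 := ENNReal.toReal_mono
              (ENNReal.div_lt_top ENNReal.ofReal_ne_top hcq0).ne hdiv
            rwa [ENNReal.toReal_ofReal hb0.le] at h2
          linarith
      -- the compact family of bounded continuous functions
      set Kset : Set (BoundedContinuousFunction X ℝ) :=
        {g | LipschitzWith (n : NNReal) ⇑g ∧ (∀ x, |g x| ≤ M) ∧
          Function.support ⇑g ⊆ closedBall x₀ (n:ℝ)} with hKdef
      have hKclosed : IsClosed Kset := by
        have h1 : IsClosed {g : BoundedContinuousFunction X ℝ | LipschitzWith (n : NNReal) ⇑g} := by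
          have heq : {g : BoundedContinuousFunction X ℝ | LipschitzWith (n : NNReal) ⇑g} =
              ⋂ (x : X), ⋂ (y : X), {g : BoundedContinuousFunction X ℝ |
                dist (g x) (g y) ≤ ((n : NNReal) : ℝ) * dist x y} := by
            ext g
            simp only [Set.mem_setOf_eq, Set.mem_iInter, lipschitzWith_iff_dist_le_mul]
          rw [heq]
          refine isClosed_iInter fun x => isClosed_iInter fun y => ?_
          exact isClosed_le (Continuous.dist
            (continuous_eval_const _)
            (continuous_eval_const _)) continuous_const
        have h2 : IsClosed {g : BoundedContinuousFunction X ℝ | ∀ x, |g x| ≤ M} := by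
          have heq : {g : BoundedContinuousFunction X ℝ | ∀ x, |g x| ≤ M} =
              ⋂ (x : X), {g : BoundedContinuousFunction X ℝ | |g x| ≤ M} := by
            ext g; simp [Set.mem_iInter]
          rw [heq]
          exact isClosed_iInter fun x => isClosed_le
            (Continuous.abs (continuous_eval_const _)) continuous_const
        have h3 : IsClosed {g : BoundedContinuousFunction X ℝ |
            Function.support ⇑g ⊆ closedBall x₀ (n:ℝ)} := by
          have heq : {g : BoundedContinuousFunction X ℝ |
              Function.support ⇑g ⊆ closedBall x₀ (n:ℝ)} =
              ⋂ (x : X) (_ : x ∉ closedBall x₀ (n:ℝ)),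
                {g : BoundedContinuousFunction X ℝ | g x = 0} := by
            ext g
            simp only [Set.mem_setOf_eq, Set.mem_iInter, Function.support_subset_iff']
          rw [heq]
          refine isClosed_iInter fun x => isClosed_iInter fun _ => ?_
          exact isClosed_eq (continuous_eval_const _) continuous_const
        exact h1.inter (h2.inter h3)
      have hKtb : TotallyBounded Kset := by
        apply totallyBounded_of_finite_discretization
        intro ε hε
        have hδpos : (0:ℝ) < ε / (8 * n) := by positivity
        have hηpos : (0:ℝ) < ε / 4 := by positivity
        set δ := ε / (8 * n) with hδdef
        set η := ε / 4 with hηdef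
        have hTB := aux_tb μ hball hγ hdbl x₀ hnR
        rw [Metric.totallyBounded_iff] at hTB
        obtain ⟨t, htfin, htcov⟩ := hTB δ hδpos
        haveI : Fintype ↥t := htfin.fintype
        set N : ℤ := ⌈M / η⌉ with hNdef
        have hMN : M / η ≤ (N:ℝ) := Int.le_ceil _
        have hmem : ∀ (g : ↥Kset) (y : ↥t),
            ⌊((g : BoundedContinuousFunction X ℝ) (y:X)) / η⌋ ∈ Set.Icc (-N) N := by
          intro g y
          have hb : |(g : BoundedContinuousFunction X ℝ) (y:X)| ≤ M := g.2.2.1 (y:X)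
          rw [Set.mem_Icc]
          constructor
          · rw [Int.le_floor]
            push_cast
            have h1 : -M ≤ (g : BoundedContinuousFunction X ℝ) (y:X) := neg_le_of_abs_le hb
            have h2 : -(M/η) ≤ (g : BoundedContinuousFunction X ℝ) (y:X) / η := by
              rw [← neg_div]
              exact div_le_div_of_nonneg_right h1 hηpos.le
            linarith
          · refine le_trans (Int.floor_le_floor ?_) (Int.floor_le_ceil _)
            exact div_le_div_of_nonneg_right (le_of_abs_le hb) hηpos.le
        refine ⟨(↥t → ↥(Set.Icc (-N) N)), inferInstance,
          fun g y => ⟨⌊((g : BoundedContinuousFunction X ℝ) (y:X)) / η⌋, hmem g y⟩, ?_⟩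
        intro g h hgh
        have key : ∀ x : X, dist ((g : BoundedContinuousFunction X ℝ) x)
            ((h : BoundedContinuousFunction X ℝ) x) ≤ ε/2 := by
          intro x
          by_cases hx : x ∈ closedBall x₀ (n:ℝ)
          · rcases Set.mem_iUnion₂.mp (htcov hx) with ⟨y, hyt, hxy⟩
            rw [mem_ball] at hxy
            have hfl : ⌊((g : BoundedContinuousFunction X ℝ) y) / η⌋ =
                ⌊((h : BoundedContinuousFunction X ℝ) y) / η⌋ :=
              congrArg Subtype.val (congrFun hgh ⟨y, hyt⟩)
            have habs : |(g : BoundedContinuousFunction X ℝ) y -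
                (h : BoundedContinuousFunction X ℝ) y| < η := aux_floor hηpos hfl
            have hnd : (n:ℝ) * δ = ε/8 := by
              rw [hδdef]; field_simp
            have hlipg : dist ((g : BoundedContinuousFunction X ℝ) x)
                ((g : BoundedContinuousFunction X ℝ) y) ≤ ε/8 := by
              have := g.2.1.dist_le_mul x y
              have hn' : (((n:ℕ) : NNReal) : ℝ) = (n : ℝ) := by norm_cast
              rw [hn'] at this
              have hmm : (n:ℝ) * dist x y ≤ (n:ℝ) * δ :=
                mul_le_mul_of_nonneg_left hxy.le (by positivity)
              linarith [this, hmm, hnd]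
            have hliph : dist ((h : BoundedContinuousFunction X ℝ) y)
                ((h : BoundedContinuousFunction X ℝ) x) ≤ ε/8 := by
              have := h.2.1.dist_le_mul y x
              have hn' : (((n:ℕ) : NNReal) : ℝ) = (n : ℝ) := by norm_cast
              rw [hn'] at this
              have hmm : (n:ℝ) * dist y x ≤ (n:ℝ) * δ := mul_le_mul_of_nonneg_left
                (by rw [dist_comm]; exact hxy.le) (by positivity)
              linarith [this, hmm, hnd]
            have hmid : dist ((g : BoundedContinuousFunction X ℝ) y)
                ((h : BoundedContinuousFunction X ℝ) y) ≤ ε/4 := by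
              rw [Real.dist_eq]
              have : η = ε/4 := hηdef
              linarith [habs]
            have htri := dist_triangle4 ((g : BoundedContinuousFunction X ℝ) x)
              ((g : BoundedContinuousFunction X ℝ) y)
              ((h : BoundedContinuousFunction X ℝ) y)
              ((h : BoundedContinuousFunction X ℝ) x)
            linarith [htri, hlipg, hmid, hliph]
          · have hg0 : (g : BoundedContinuousFunction X ℝ) x = 0 :=
              Function.support_subset_iff'.mp g.2.2.2 x hx
            have hh0 : (h : BoundedContinuousFunction X ℝ) x = 0 :=
              Function.support_subset_iff'.mp h.2.2.2 x hx
            rw [hg0, hh0, dist_self]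
            positivity
        have hd : dist (g : BoundedContinuousFunction X ℝ) (h : BoundedContinuousFunction X ℝ)
            ≤ ε/2 := (BoundedContinuousFunction.dist_le (by positivity)).mpr key
        linarith
      have hKcomp : IsCompact Kset := hKtb.isCompact_of_isClosed hKclosed
      haveI : CompactSpace ↥Kset := isCompact_iff_compactSpace.mp hKcomp
      have memg : ∀ g : ↥Kset, MemLp ⇑(g : BoundedContinuousFunction X ℝ) p μ := fun g =>
        aux_memLp μ hp0 hp' (g : BoundedContinuousFunction X ℝ).continuous
          measurableSet_closedBall hμn g.2.2.2
          (fun x => by rw [Real.norm_eq_abs]; exact g.2.2.1 x)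
      set φ : ↥Kset → MeasureTheory.Lp ℝ p μ :=
        fun g => MemLp.toLp _ (memg g) with hφdef
      have hφcont : Continuous φ := by
        have hC0 : 0 ≤ (μ (closedBall x₀ (n:ℝ)) ^ (1/q)).toReal := ENNReal.toReal_nonneg
        refine LipschitzWith.continuous (K := ⟨_, hC0⟩) (LipschitzWith.of_dist_le_mul ?_)
        intro g h
        rw [dist_eq_norm]
        have hsub2 : φ g - φ h = MemLp.toLp
            (⇑(g : BoundedContinuousFunction X ℝ) - ⇑(h : BoundedContinuousFunction X ℝ))
            ((memg g).sub (memg h)) := ((memg g).toLp_sub (memg h)).symm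
        rw [hsub2, MeasureTheory.Lp.norm_toLp]
        have hsupp' : Function.support
            (⇑(g : BoundedContinuousFunction X ℝ) - ⇑(h : BoundedContinuousFunction X ℝ)) ⊆
            closedBall x₀ (n:ℝ) :=
          (Function.support_sub _ _).trans (Set.union_subset g.2.2.2 h.2.2.2)
        have hM' : ∀ x, ‖(⇑(g : BoundedContinuousFunction X ℝ) -
            ⇑(h : BoundedContinuousFunction X ℝ)) x‖ ≤
            dist (g : BoundedContinuousFunction X ℝ) (h : BoundedContinuousFunction X ℝ) := by
          intro x
          rw [Pi.sub_apply, ← dist_eq_norm]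
          exact BoundedContinuousFunction.dist_coe_le_dist x
        have hb := aux_elp_upper μ hp0 hp' measurableSet_closedBall hsupp' hM'
        have hrhs : ((‖dist (g : BoundedContinuousFunction X ℝ)
            (h : BoundedContinuousFunction X ℝ)‖₊ : ℝ≥0∞) *
            μ (closedBall x₀ (n:ℝ)) ^ (1/q)) ≠ ⊤ :=
          ENNReal.mul_ne_top ENNReal.coe_ne_top
            (ENNReal.rpow_ne_top_of_nonneg (by positivity) hμn)
        have h2 := ENNReal.toReal_mono hrhs hb
        rw [ENNReal.toReal_mul] at h2
        have h3 : ((‖dist (g : BoundedContinuousFunction X ℝ)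
            (h : BoundedContinuousFunction X ℝ)‖₊ : ℝ≥0∞)).toReal =
            dist (g : BoundedContinuousFunction X ℝ) (h : BoundedContinuousFunction X ℝ) := by
          simp [Real.norm_eq_abs, abs_of_nonneg dist_nonneg]
        rw [h3] at h2
        have h4 : dist (g : BoundedContinuousFunction X ℝ)
              (h : BoundedContinuousFunction X ℝ) *
              (μ (closedBall x₀ (n:ℝ)) ^ (1/q)).toReal =
            ((⟨_, hC0⟩ : NNReal) : ℝ) * dist g h := by
          rw [Subtype.dist_eq, mul_comm]
        exact h2.trans_eq h4
      have hrange : IsCompact (Set.range φ) := isCompact_range hφcont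
      have hset : {f : MeasureTheory.Lp ℝ p μ | ‖f‖ ≤ (n : ℝ) ∧
          ∃ g : X → ℝ, LipschitzWith (n : NNReal) g ∧ (⇑f =ᵐ[μ] g) ∧
            Function.support g ⊆ closedBall x₀ (n : ℝ)} =
          Set.range φ ∩ {f : MeasureTheory.Lp ℝ p μ | ‖f‖ ≤ (n : ℝ)} := by
        ext f
        constructor
        · rintro ⟨hfn, g, hlip, hae, hsupp⟩
          have hgb := hbound f hfn g hlip hae hsupp
          set G : BoundedContinuousFunction X ℝ :=
            BoundedContinuousFunction.ofNormedAddCommGroup g hlip.continuous M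
              (fun x => by rw [Real.norm_eq_abs]; exact hgb x) with hGdef
          have hGcoe : ⇑G = g := rfl
          have hGK : G ∈ Kset := by
            refine ⟨?_, ?_, ?_⟩
            · rw [hGcoe]; exact hlip
            · intro x; rw [hGcoe]; exact hgb x
            · rw [hGcoe]; exact hsupp
          have hφG : ⇑(φ ⟨G, hGK⟩) =ᵐ[μ] g := MemLp.coeFn_toLp _
          have hfφ : φ ⟨G, hGK⟩ = f := MeasureTheory.Lp.ext (hφG.trans hae.symm)
          exact ⟨⟨⟨G, hGK⟩, hfφ⟩, hfn⟩
        · rintro ⟨⟨g, hfeq⟩, hfn⟩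
          refine ⟨hfn, ⇑(g : BoundedContinuousFunction X ℝ), g.2.1, ?_, g.2.2.2⟩
          rw [← hfeq]
          exact MemLp.coeFn_toLp _
      rw [hset]
      exact hrange.inter_right (isClosed_le continuous_norm continuous_const)
  refine ⟨hcomp, ?_⟩
  refine ⟨fun n => {f : MeasureTheory.Lp ℝ p μ | ‖f‖ ≤ (n : ℝ) ∧
      ∃ g : X → ℝ, LipschitzWith (n : NNReal) g ∧ (⇑f =ᵐ[μ] g) ∧
        Function.support g ⊆ closedBall x₀ (n : ℝ)}, hcomp, ?_⟩
  ext f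
  simp only [Set.mem_iUnion, Set.mem_setOf_eq]
  constructor
  · rintro ⟨n, hfn, g, hlip, hae, hsupp⟩
    exact ⟨g, n, hlip, hae, (isBounded_closedBall).subset hsupp⟩
  · rintro ⟨g, K, hlip, hae, hbd⟩
    obtain ⟨r, hr⟩ := hbd.subset_closedBall x₀
    obtain ⟨n, hn⟩ := exists_nat_ge (max (max ‖f‖ r) (K : ℝ))
    have h1 : ‖f‖ ≤ (n : ℝ) :=
      le_trans (le_trans (le_max_left _ _) (le_max_left _ _)) hn
    have h2 : r ≤ (n : ℝ) :=
      le_trans (le_trans (le_max_right _ _) (le_max_left _ _)) hn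
    have h3 : (K : ℝ) ≤ (n : ℝ) := le_trans (le_max_right _ _) hn
    refine ⟨n, h1, g, hlip.weaken ?_, hae, hr.trans (closedBall_subset_closedBall h2)⟩
    exact_mod_cast h3
end
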